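/- Let Ω ⊆ ℝⁿ be a nonempty closed hyper-rectangle and g : Ω → ℝⁿ a continuously differentiable map satisfying: ∂gᵢ/∂xⱼ(x) ≥ 0 for all i ≠ j and ∑ᵢ ∂gᵢ/∂xⱼ(x) ≤ 0 for all j, at every x ∈ Ω. Suppose that for every proper nonempty subset K ⊊ {1,…,n} there exist i ∈ K and j ∉ K with ∂gᵢ/∂xⱼ(x) > 0 for all x ∈ Ω. Then for all x ≠ y in Ω with neither x < y componentwise nor y < x componentwise, ∑ᵢ sgn(xᵢ − yᵢ)(gᵢ(x) − gᵢ(y)) < 0. -/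

import Mathlib

open Finset

lemma sign_mul_self' (r : ℝ) : Real.sign r * r = |r| := by
  rcases lt_trichotomy r 0 with h | h | h
  · rw [Real.sign_of_neg h, abs_of_neg h]; ring
  · simp [h]
  · rw [Real.sign_of_pos h, abs_of_pos h]; ring

lemma abs_sign_le (r : ℝ) : |Real.sign r| ≤ 1 := by
  rcases lt_trichotomy r 0 with h | h | h
  · rw [Real.sign_of_neg h]; norm_num
  · simp [h]
  · rw [Real.sign_of_pos h]; norm_num

lemma sign_mul_le_abs (s r : ℝ) : Real.sign s * r ≤ |r| := by
  calc Real.sign s * r ≤ |Real.sign s * r| := le_abs_self _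
    _ = |Real.sign s| * |r| := abs_mul _ _
    _ ≤ 1 * |r| := by
        have := abs_sign_le s
        nlinarith [abs_nonneg r]
    _ = |r| := one_mul _

lemma keyJ (n : ℕ) (J : Fin n → Fin n → ℝ) (d : Fin n → ℝ)
    (hJ : ∀ i j, i ≠ j → 0 ≤ J i j) (hc : ∀ j, (∑ i, J i j) ≤ 0)
    (i₀ j₀ : Fin n) (hd0 : d j₀ ≠ 0) (hs : Real.sign (d i₀) * d j₀ ≤ 0)
    (hJ0 : 0 < J i₀ j₀) :
    ∑ j, ∑ i, Real.sign (d i) * (d j * J i j) < 0 := by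
  have key1 : ∀ j i, Real.sign (d i) * (d j * J i j) ≤ |d j| * J i j := by
    intro j i
    rcases eq_or_ne i j with rfl | hij
    · rw [← mul_assoc, sign_mul_self' (d i)]
    · calc Real.sign (d i) * (d j * J i j) = (Real.sign (d i) * d j) * J i j := by ring
        _ ≤ |d j| * J i j := mul_le_mul_of_nonneg_right (sign_mul_le_abs _ _) (hJ i j hij)
  have strict : ∑ i, Real.sign (d i) * (d j₀ * J i j₀) < |d j₀| * ∑ i, J i j₀ := by
    rw [Finset.mul_sum]
    refine Finset.sum_lt_sum (fun i _ => key1 j₀ i) ⟨i₀, Finset.mem_univ _, ?_⟩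
    have h1 : Real.sign (d i₀) * (d j₀ * J i₀ j₀) ≤ 0 := by nlinarith
    have h2 : 0 < |d j₀| * J i₀ j₀ := mul_pos (abs_pos.mpr hd0) hJ0
    linarith
  have lt1 : ∑ j, ∑ i, Real.sign (d i) * (d j * J i j) < ∑ j, |d j| * ∑ i, J i j := by
    refine Finset.sum_lt_sum (fun j _ => ?_) ⟨j₀, Finset.mem_univ _, strict⟩
    rw [Finset.mul_sum]
    exact Finset.sum_le_sum fun i _ => key1 j i
  have le2 : ∑ j, |d j| * ∑ i, J i j ≤ 0 := by
    refine Finset.sum_nonpos fun j _ => ?_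
    have := hc j
    nlinarith [abs_nonneg (d j)]
  linarith

/-- Strict l1-contraction inequality under an irreducibility-type condition
on the off-diagonal Jacobian entries. -/
theorem stmt_2 (n : ℕ) (a b : Fin n → ℝ)
    (Ω : Set (Fin n → ℝ)) (hΩ : Ω = Set.univ.pi fun i => Set.Icc (a i) (b i))
    (hne : Ω.Nonempty)
    (g : (Fin n → ℝ) → (Fin n → ℝ)) (hg : ContDiff ℝ 1 g)
    (hcoop : ∀ x ∈ Ω, ∀ i j, i ≠ j → 0 ≤ fderiv ℝ g x (Pi.single j 1) i)
    (hcol : ∀ x ∈ Ω, ∀ j, ∑ i, fderiv ℝ g x (Pi.single j 1) i ≤ 0)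
    (hirr : ∀ K : Finset (Fin n), K.Nonempty → K ≠ Finset.univ →
      ∃ i ∈ K, ∃ j ∉ K, ∀ x ∈ Ω, 0 < fderiv ℝ g x (Pi.single j 1) i) :
    ∀ x ∈ Ω, ∀ y ∈ Ω, x ≠ y →
      ¬(∀ i, x i < y i) → ¬(∀ i, y i < x i) →
      ∑ i, Real.sign (x i - y i) * (g x i - g y i) < 0 := by
  classical
  intro x hx y hy hxy hlt hgt
  -- convexity of Ω
  have hconv : Convex ℝ Ω := by
    rw [hΩ]; exact convex_pi fun i _ => convex_Icc _ _
  -- the segment stays in Ω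
  have hseg : ∀ t ∈ Set.Icc (0:ℝ) 1, y + t • (x - y) ∈ Ω := by
    intro t ht
    have : y + t • (x - y) = (1 - t) • y + t • x := by
      funext k; simp [Pi.add_apply, Pi.smul_apply, Pi.sub_apply]; ring
    rw [this]
    exact hconv hy hx (by linarith [ht.2]) ht.1 (by ring)
  -- choose the strict pair
  obtain ⟨i₀, j₀, hd0, hs, hpos⟩ :
      ∃ i₀ j₀ : Fin n, x j₀ - y j₀ ≠ 0 ∧ Real.sign (x i₀ - y i₀) * (x j₀ - y j₀) ≤ 0 ∧
        ∀ z ∈ Ω, 0 < fderiv ℝ g z (Pi.single j₀ 1) i₀ := by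
    by_cases hZ : ∃ i, x i - y i = 0
    · set K : Finset (Fin n) := Finset.univ.filter (fun i => x i - y i = 0) with hK
      have hKne : K.Nonempty := by
        obtain ⟨i, hi⟩ := hZ
        exact ⟨i, by simp [hK, hi]⟩
      have hKuniv : K ≠ Finset.univ := by
        obtain ⟨k, hk⟩ := Function.ne_iff.mp hxy
        intro h
        have : k ∈ K := h ▸ Finset.mem_univ k
        simp [hK] at this
        exact hk (by linarith)
      obtain ⟨i₀, hi₀, j₀, hj₀, hp⟩ := hirr K hKne hKuniv
      refine ⟨i₀, j₀, ?_, ?_, hp⟩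
      · intro h; exact hj₀ (by simp [hK, h])
      · have : x i₀ - y i₀ = 0 := by simpa [hK] using hi₀
        rw [this, Real.sign_zero, zero_mul]
    · push_neg at hZ
      set K : Finset (Fin n) := Finset.univ.filter (fun i => 0 < x i - y i) with hK
      have hKne : K.Nonempty := by
        push_neg at hlt
        obtain ⟨i, hi⟩ := hlt
        have h2 : 0 < x i - y i := lt_of_le_of_ne (by linarith) (Ne.symm (hZ i))
        exact ⟨i, Finset.mem_filter.mpr ⟨Finset.mem_univ i, h2⟩⟩
      have hKuniv : K ≠ Finset.univ := by
        push_neg at hgt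
        obtain ⟨i, hi⟩ := hgt
        intro h
        have : i ∈ K := h ▸ Finset.mem_univ i
        simp [hK] at this
        linarith
      obtain ⟨i₀, hi₀, j₀, hj₀, hp⟩ := hirr K hKne hKuniv
      have hi₀' : 0 < x i₀ - y i₀ := by simpa [hK] using hi₀
      have hj₀' : x j₀ - y j₀ < 0 := by
        have : ¬ 0 < x j₀ - y j₀ := fun h => hj₀ (Finset.mem_filter.mpr ⟨Finset.mem_univ j₀, h⟩)
        exact lt_of_le_of_ne (by linarith) (hZ j₀)
      refine ⟨i₀, j₀, ne_of_lt hj₀', ?_, hp⟩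
      rw [Real.sign_of_pos hi₀', one_mul]
      linarith
  -- the function along the segment
  set h : ℝ → ℝ := fun t => ∑ i, Real.sign (x i - y i) * g (y + t • (x - y)) i with hh
  have hderiv : ∀ t : ℝ, HasDerivAt h
      (∑ i, Real.sign (x i - y i) * fderiv ℝ g (y + t • (x - y)) (x - y) i) t := by
    intro t
    have hp : HasDerivAt (fun t : ℝ => y + t • (x - y)) (x - y) t := by
      simpa using ((hasDerivAt_id t).smul_const (x - y)).const_add y
    have hg' := (hg.differentiable one_ne_zero (y + t • (x - y))).hasFDerivAt
    have hcomp := hg'.comp_hasDerivAt t hp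
    exact HasDerivAt.fun_sum fun i _ =>
      ((hasDerivAt_pi.mp hcomp) i).const_mul (Real.sign (x i - y i))
  -- expansion of directional derivative
  have hexp : ∀ z : Fin n → ℝ, ∀ i, fderiv ℝ g z (x - y) i
      = ∑ j, (x j - y j) * fderiv ℝ g z (Pi.single j 1) i := by
    intro z i
    have hxy' : x - y = ∑ j, (x j - y j) • (Pi.single j 1 : Fin n → ℝ) := by
      funext k
      simp [Finset.sum_apply, Pi.single_apply]
    conv_lhs => rw [hxy']
    rw [map_sum]
    simp [Finset.sum_apply]
  -- the derivative is negative on [0,1]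
  have hneg : ∀ t ∈ Set.Icc (0:ℝ) 1,
      (∑ i, Real.sign (x i - y i) * fderiv ℝ g (y + t • (x - y)) (x - y) i) < 0 := by
    intro t ht
    have hz := hseg t ht
    have : (∑ i, Real.sign (x i - y i) * fderiv ℝ g (y + t • (x - y)) (x - y) i)
        = ∑ j, ∑ i, Real.sign (x i - y i) *
            ((x j - y j) * fderiv ℝ g (y + t • (x - y)) (Pi.single j 1) i) := by
      rw [Finset.sum_comm]
      exact Finset.sum_congr rfl fun i _ => by rw [hexp, Finset.mul_sum]
    rw [this]
    exact keyJ n (fun i j => fderiv ℝ g (y + t • (x - y)) (Pi.single j 1) i)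
      (fun i => x i - y i)
      (fun i j hij => hcoop _ hz i j hij) (fun j => hcol _ hz j)
      i₀ j₀ hd0 hs (hpos _ hz)
  -- strict antitonicity
  have hdiff : Differentiable ℝ h := fun t => (hderiv t).differentiableAt
  have hanti : StrictAntiOn h (Set.Icc (0:ℝ) 1) := by
    refine strictAntiOn_of_deriv_neg (convex_Icc 0 1) hdiff.continuous.continuousOn ?_
    intro t ht
    rw [interior_Icc] at ht
    rw [(hderiv t).deriv]
    exact hneg t ⟨le_of_lt ht.1, le_of_lt ht.2⟩
  have h10 : h 1 < h 0 := hanti (Set.left_mem_Icc.mpr zero_le_one)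
    (Set.right_mem_Icc.mpr zero_le_one) zero_lt_one
  have e1 : y + (1:ℝ) • (x - y) = x := by funext k; simp
  have e0 : y + (0:ℝ) • (x - y) = y := by funext k; simp
  have h1eq : h 1 = ∑ i, Real.sign (x i - y i) * g x i := by rw [hh]; simp only [e1]
  have h0eq : h 0 = ∑ i, Real.sign (x i - y i) * g y i := by rw [hh]; simp only [e0]
  have hfin : ∑ i, Real.sign (x i - y i) * (g x i - g y i) = h 1 - h 0 := by
    rw [h1eq, h0eq, ← Finset.sum_sub_distrib]
    exact Finset.sum_congr rfl fun i _ => by ring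
  linarith
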